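/- The delay exponential function satisfies the delay differential equation d/dt dexp(-μt; -μτ) = -μ · dexp(-μ(t-τ); -μτ) for all t > 0 with t not an integer multiple of τ. -/

import Mathlib

open Real Set

noncomputable def dexp (μ τ t : ℝ) : ℝ :=
  ∑' n : ℕ, (-μ) ^ n * (t - n * τ) ^ n / (Nat.factorial n) * (if (n : ℝ) * τ ≤ t then 1 else 0)

/-- The delay exponential satisfies the delay differential equation
`d/dt dexp(-μt; -μτ) = -μ · dexp(-μ(t-τ); -μτ)` for all `t > 0` that are not
integer multiples of `τ`. -/
theorem dexp_hasDerivAt (μ τ : ℝ) (hμ : 0 < μ) (hτ : 0 < τ) (t : ℝ) (ht : 0 < t)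
    (hmult : ∀ n : ℕ, t ≠ n * τ) :
    HasDerivAt (fun s => dexp μ τ s) (-μ * dexp μ τ (t - τ)) t := by
  set N := ⌊t / τ⌋₊ with hNdef
  have h1 : (N : ℝ) * τ < t := by
    have h : (N : ℝ) ≤ t / τ := Nat.floor_le (by positivity)
    have h' : (N : ℝ) * τ ≤ t := (le_div_iff₀ hτ).mp h
    rcases lt_or_eq_of_le h' with h'' | h''
    · exact h''
    · exact absurd h''.symm (hmult N)
  have h2 : t < ((N : ℝ) + 1) * τ := by
    have h : t / τ < (N : ℝ) + 1 := Nat.lt_floor_add_one (t / τ)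
    rwa [div_lt_iff₀ hτ] at h
  have key : ∀ s, (N : ℝ) * τ < s → s < ((N : ℝ) + 1) * τ →
      dexp μ τ s = ∑ n ∈ Finset.range (N + 1),
        (-μ) ^ n * (s - n * τ) ^ n / (Nat.factorial n) := by
    intro s hs1 hs2
    unfold dexp
    rw [tsum_eq_sum (s := Finset.range (N + 1))]
    · apply Finset.sum_congr rfl
      intro n hn
      have hn' : (n : ℝ) ≤ N := by
        exact_mod_cast Nat.lt_succ_iff.mp (Finset.mem_range.mp hn)
      have : (n : ℝ) * τ ≤ s := by nlinarith
      simp [this]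
    · intro n hn
      have hn' : (N : ℝ) + 1 ≤ n := by
        exact_mod_cast Nat.succ_le_of_lt (Nat.lt_of_not_le (fun h => hn (Finset.mem_range.mpr (Nat.lt_succ_of_le h))))
      have : ¬ ((n : ℝ) * τ ≤ s) := by push_neg; nlinarith
      simp [this]
  have key2 : dexp μ τ (t - τ) = ∑ m ∈ Finset.range N,
      (-μ) ^ m * (t - τ - m * τ) ^ m / (Nat.factorial m) := by
    unfold dexp
    rw [tsum_eq_sum (s := Finset.range N)]
    · apply Finset.sum_congr rfl
      intro m hm
      have hm' : (m : ℝ) + 1 ≤ N := by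
        exact_mod_cast Nat.succ_le_of_lt (Finset.mem_range.mp hm)
      have : (m : ℝ) * τ ≤ t - τ := by nlinarith
      simp [this]
    · intro m hm
      have hm' : (N : ℝ) ≤ m := by
        exact_mod_cast Nat.le_of_not_lt (fun h => hm (Finset.mem_range.mpr h))
      have : ¬ ((m : ℝ) * τ ≤ t - τ) := by push_neg; nlinarith
      simp [this]
  have hF : HasDerivAt
      (fun s => ∑ n ∈ Finset.range (N + 1), (-μ) ^ n * (s - n * τ) ^ n / (Nat.factorial n))
      (∑ n ∈ Finset.range (N + 1), (-μ) ^ n * ((n : ℝ) * (t - n * τ) ^ (n - 1)) / (Nat.factorial n)) t := by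
    apply HasDerivAt.fun_sum
    intro n _
    have h : HasDerivAt (fun s : ℝ => (s - (n : ℝ) * τ) ^ n)
        ((n : ℝ) * (t - (n : ℝ) * τ) ^ (n - 1)) t := by
      simpa using (((hasDerivAt_id t).sub_const ((n : ℝ) * τ)).fun_pow n)
    simpa [mul_comm, mul_assoc, mul_left_comm] using (h.const_mul ((-μ) ^ n)).div_const (Nat.factorial n)
  have hsum : (∑ n ∈ Finset.range (N + 1), (-μ) ^ n * ((n : ℝ) * (t - n * τ) ^ (n - 1)) / (Nat.factorial n))
      = -μ * ∑ m ∈ Finset.range N, (-μ) ^ m * (t - τ - m * τ) ^ m / (Nat.factorial m) := by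
    rw [Finset.sum_range_succ', Finset.mul_sum]
    simp only [Nat.cast_zero, pow_zero, zero_mul, mul_zero, zero_div, add_zero]
    apply Finset.sum_congr rfl
    intro m _
    have hfac : ((Nat.factorial (m + 1) : ℝ)) = ((m : ℝ) + 1) * Nat.factorial m := by
      push_cast [Nat.factorial_succ]; ring
    have hfm : (Nat.factorial m : ℝ) ≠ 0 := by positivity
    have hx : t - ((m : ℝ) + 1) * τ = t - τ - m * τ := by ring
    rw [pow_succ]
    push_cast
    rw [hfac, hx]
    field_simp
  have heq : (fun s => dexp μ τ s) =ᶠ[nhds t]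
      (fun s => ∑ n ∈ Finset.range (N + 1), (-μ) ^ n * (s - n * τ) ^ n / (Nat.factorial n)) := by
    filter_upwards [Ioo_mem_nhds h1 h2] with s hs
    exact key s hs.1 hs.2
  rw [key2, ← hsum]
  exact hF.congr_of_eventuallyEq heq
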